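/- arXiv:2509.09691 — 2 statements merged into one kernel-verified Lean document; each statement's English description precedes it below -/
import Mathlib

section
/- The quantity 1 - S does not satisfy the triangle inequality: there exist vectors ψ₁, ψ₂, ψ₃ ∈ ℂ^L (e.g., L = 1) such that 1 - S(ψ₁,ψ₃) > (1 - S(ψ₁,ψ₂)) + (1 - S(ψ₂,ψ₃)). -/
open Finset

noncomputable def energy {L : ℕ} (ψ : Fin L → ℂ) : ℝ := ∑ x, ‖ψ x‖ ^ 2

noncomputable def resScore {L : ℕ} (ψ₁ ψ₂ : Fin L → ℂ) : ℝ :=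
  if 0 < energy ψ₁ + energy ψ₂ then
    (1/2) * ((∑ x, ‖ψ₁ x + ψ₂ x‖ ^ 2) / (energy ψ₁ + energy ψ₂)) *
      (2 * Real.sqrt (energy ψ₁ * energy ψ₂) / (energy ψ₁ + energy ψ₂))
  else 0

noncomputable def herm {L : ℕ} (ψ₁ ψ₂ : Fin L → ℂ) : ℂ :=
  ∑ x, ψ₁ x * (starRingEnd ℂ) (ψ₂ x)

theorem one_sub_resonance_not_triangle :
    ∃ (L : ℕ) (ψ₁ ψ₂ ψ₃ : Fin L → ℂ),
      (1 - resScore ψ₁ ψ₂) + (1 - resScore ψ₂ ψ₃) < 1 - resScore ψ₁ ψ₃ := by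
  refine ⟨1, (fun _ => 1), (fun _ => 2), (fun _ => 4), ?_⟩
  have e1 : energy (fun _ : Fin 1 => (1 : ℂ)) = 1 := by
    simp [energy, Fin.sum_univ_one]
  have e2 : energy (fun _ : Fin 1 => (2 : ℂ)) = 4 := by
    simp [energy, Fin.sum_univ_one]
    norm_num [Complex.norm_ofNat]
  have e4 : energy (fun _ : Fin 1 => (4 : ℂ)) = 16 := by
    simp [energy, Fin.sum_univ_one]
    norm_num [Complex.norm_ofNat]
  have s4 : Real.sqrt 4 = 2 := by
    rw [show (4:ℝ) = 2^2 by norm_num, Real.sqrt_sq]; norm_num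
  have s32 : Real.sqrt (4 * 16) = 8 := by
    rw [show (4*16:ℝ) = 8^2 by norm_num, Real.sqrt_sq]; norm_num
  have s16 : Real.sqrt (1 * 16) = 4 := by
    rw [show (1*16:ℝ) = 4^2 by norm_num, Real.sqrt_sq]; norm_num
  have h12 : resScore (fun _ : Fin 1 => (1 : ℂ)) (fun _ => 2) = 18/25 := by
    rw [resScore, e1, e2, if_pos (by norm_num), one_mul, Fin.sum_univ_one, s4]
    norm_num [Complex.norm_ofNat]
  have h23 : resScore (fun _ : Fin 1 => (2 : ℂ)) (fun _ => 4) = 18/25 := by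
    rw [resScore, e2, e4, if_pos (by norm_num), Fin.sum_univ_one, s32]
    norm_num [Complex.norm_ofNat]
  have h13 : resScore (fun _ : Fin 1 => (1 : ℂ)) (fun _ => 4) = 100/289 := by
    rw [resScore, e1, e4, if_pos (by norm_num), Fin.sum_univ_one, s16]
    norm_num [Complex.norm_ofNat]
  rw [h12, h23, h13]
  norm_num
end

section
/- For two real unit vectors u, v ∈ ℝ^L (viewed as complex vectors via the sign-phase mapping), S(u,v) = (1 + u·v)/2, i.e., resonance is an affine function of cosine similarity on the unit sphere. -/
open Finset

theorem resonance_unit_vectors {L : ℕ} (u v : Fin L → ℝ)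
    (hu : ∑ x, u x ^ 2 = 1) (hv : ∑ x, v x ^ 2 = 1) :
    resScore (fun x => (u x : ℂ)) (fun x => (v x : ℂ)) =
      (1 + ∑ x, u x * v x) / 2 := by
  have heu : energy (fun x => (u x : ℂ)) = 1 := by
    simp [energy, Complex.norm_real, sq_abs, hu]
  have hev : energy (fun x => (v x : ℂ)) = 1 := by
    simp [energy, Complex.norm_real, sq_abs, hv]
  have hsum : (∑ x, ‖(u x : ℂ) + (v x : ℂ)‖ ^ 2)
      = 2 + 2 * ∑ x, u x * v x := by
    have : ∀ x, ‖(u x : ℂ) + (v x : ℂ)‖ ^ 2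
        = u x ^ 2 + v x ^ 2 + 2 * (u x * v x) := by
      intro x
      rw [← Complex.ofReal_add, Complex.norm_real, Real.norm_eq_abs, sq_abs]
      ring
    rw [Finset.sum_congr rfl fun x _ => this x]
    rw [Finset.sum_add_distrib, Finset.sum_add_distrib, hu, hv, ← Finset.mul_sum]
    ring
  simp only [resScore, heu, hev, hsum]
  norm_num
  ring
end
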